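/- For the Hasse–Schmidt derivation operators D_h on ⋀M_n (with D_lε^i = ε^{i+l}), for all i ≥ 1, h ≥ 1 and p ∈ ⋀M_n one has D_h(ε^i ∧ p) = ε^i ∧ D_h p + D_{h−1}(ε^{i+1} ∧ p). -/

import Mathlib

open ExteriorAlgebra in
/-- For the Hasse–Schmidt operators `D_h` on `⋀M_n`:
`D_h(ε^i ∧ p) = ε^i ∧ D_h p + D_{h−1}(ε^{i+1} ∧ p)` for `i ≥ 1`, `h ≥ 1`. -/
theorem hasseSchmidt_peel (n : ℕ) (M : Type*) [AddCommGroup M] [Module ℤ M]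
    (ε : ℕ → M) (hε : ∀ m : ℕ, n < m → ε m = 0)
    (D : ℕ → Module.End ℤ (ExteriorAlgebra ℤ M))
    (hD0 : D 0 = 1)
    (hLeib : ∀ (h : ℕ) (p q : ExteriorAlgebra ℤ M),
      D h (p * q) = ∑ x ∈ Finset.HasAntidiagonal.antidiagonal h, D x.1 p * D x.2 q)
    (hinit : ∀ l i : ℕ, 1 ≤ i → D l (ι ℤ (ε i)) = ι ℤ (ε (i + l))) :
    ∀ (i h : ℕ) (p : ExteriorAlgebra ℤ M), 1 ≤ i → 1 ≤ h →
      D h (ι ℤ (ε i) * p) =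
        ι ℤ (ε i) * D h p + D (h - 1) (ι ℤ (ε (i + 1)) * p) := by
  intro i h p hi hh
  obtain ⟨h', rfl⟩ : ∃ h', h = h' + 1 := ⟨h - 1, (Nat.succ_pred_eq_of_pos hh).symm⟩
  rw [hLeib, hLeib]
  simp only [hinit _ _ hi, hinit _ _ (le_trans hi (Nat.le_succ i)),
    Nat.add_sub_cancel]
  rw [Finset.Nat.antidiagonal_succ, Finset.sum_cons, Finset.sum_map]
  simp only [Function.Embedding.coeFn_mk, Prod.map, Nat.add_zero, hD0,
    Nat.succ_eq_add_one]
  congr 1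
  apply Finset.sum_congr rfl
  intro x hx
  simp only [Function.Embedding.coe_prodMap, Function.Embedding.coeFn_mk,
    Function.Embedding.refl_apply, Prod.map_fst, Prod.map_snd, id_eq, Nat.succ_eq_add_one]
  rw [show i + (x.1 + 1) = i + 1 + x.1 by omega]
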